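/- Let W be a set of allowed diagrams in a relational coloring language L, and suppose that for some λ ≥ ℶ_{|L|⁺}(|L|) the class K(W) has a model of cardinality λ. Then (1) for every infinite cardinal μ, K(W) has a model of cardinality μ, and (2) K(W) has no maximal models: every (M,c) ∈ K(W) is a proper substructure of some (N,c') ∈ K(W). -/

import Mathlib

universe u v

open Cardinal

/-- A relational coloring language: a family of pairwise disjoint nonempty sets `R_n`
(`n ≥ 1`) of `n`-ary colors, encoded as a type of colors together with an arity map
whose fibers over `n ≥ 1` are all nonempty. -/
structure ColoringLanguage : Type (u + 1) where
  Color : Type u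
  arity : Color → ℕ
  arity_pos : ∀ r, 1 ≤ arity r
  exists_arity : ∀ n : ℕ, 1 ≤ n → ∃ r, arity r = n

namespace ColoringLanguage

variable (L : ColoringLanguage.{u})

/-- A diagram is (encoded as) a list of colors whose `i`-th entry (0-based) is an
`(i+1)`-ary color; it represents the function `w : [n] → R` with `w(k) ∈ R_k`. -/
def IsDiagram (l : List L.Color) : Prop :=
  ∀ (i : ℕ) (h : i < l.length), L.arity l[i] = i + 1

/-- A set of allowed diagrams: a nonempty set of diagrams closed under restriction to
initial segments. -/
def IsAllowed (W : Set (List L.Color)) : Prop :=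
  W.Nonempty ∧ (∀ l ∈ W, L.IsDiagram l) ∧ ∀ l ∈ W, ∀ m : ℕ, l.take m ∈ W

end ColoringLanguage

/-- `ERge W γ l` says that the existence rank of `l` with respect to `W` is `≥ γ`:
`ER(l;W) ≥ β + 1` iff some one-step extension `l' ∈ W` of `l` has `ER(l';W) ≥ β`,
with the limit (and zero) clauses as usual. -/
noncomputable def ERge {C : Type v} (W : Set (List C)) : Ordinal.{u} → List C → Prop :=
  WellFounded.fix Ordinal.lt_wf fun α IH l =>
    ∀ β, ∀ h : β < α,
      ∃ l' ∈ W, l'.length = l.length + 1 ∧ l'.take l.length = l ∧ IH β h l'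

/-- `prunedW W S` is `W_S`, the set of elements of `W` comparable with some element of `S`. -/
def prunedW {C : Type v} (W S : Set (List C)) : Set (List C) :=
  {w ∈ W | ∃ u ∈ S, w <+: u ∨ u <+: w}

/-- `quotW W wbar` is `W / w̄`: the set of diagrams `w / w̄` for `w ∈ W` extending `w̄`. -/
def quotW {C : Type v} (W : Set (List C)) (wbar : List C) : Set (List C) :=
  (fun l => l.drop wbar.length) '' {l ∈ W | wbar <+: l}

/-- The beth function with base `κ`: `ℶ_0(κ) = κ`, `ℶ_{α+1}(κ) = 2 ^ ℶ_α(κ)`,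
and suprema at limits. -/
noncomputable def bethF (κ : Cardinal.{u}) (o : Ordinal.{u}) : Cardinal.{u} :=
  Ordinal.limitRecOn o κ (fun _ ih => 2 ^ ih)
    fun o' _ ih => ⨆ b : Set.Iio o', ih b.1 b.2

/-- The cardinals `κ_α`: `κ_α = α` for finite `α`, suprema at limits, and
`κ_{β+1} = 2 ^ κ_β` for `β ≥ ω`. -/
noncomputable def kappaC (o : Ordinal.{u}) : Cardinal.{u} :=
  Ordinal.limitRecOn o 0
    (fun o' ih => if o' < Ordinal.omega0 then ih + 1 else 2 ^ ih)
    fun o' _ ih => ⨆ b : Set.Iio o', ih b.1 b.2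

namespace ColoringLanguage

variable (L : ColoringLanguage.{u}) {σ τ : Type u}

/-- `c` is an `L`-coloring of the set `M`: every finite nonempty `A ⊆ M` gets a color
of arity `|A|`. (Values of `c` outside of `M` are irrelevant.) -/
def IsColoring (M : Set σ) (c : Finset σ → L.Color) : Prop :=
  ∀ A : Finset σ, ↑A ⊆ M → A.Nonempty → L.arity (c A) = A.card

/-- `B` is monochromatic for `c`: any two finite nonempty subsets of `B` of equal size
get the same color. -/
def Mono (c : Finset σ → L.Color) (B : Set σ) : Prop :=
  ∀ A₁ A₂ : Finset σ, ↑A₁ ⊆ B → ↑A₂ ⊆ B → A₁.Nonempty → A₁.card = A₂.card → c A₁ = c A₂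

/-- `l` is the diagram of the (monochromatic) finite set `B` under `c`. -/
def DiagramOf (c : Finset σ → L.Color) (B : Finset σ) (l : List L.Color) : Prop :=
  l.length = B.card ∧ ∀ A : Finset σ, A ⊆ B → A.Nonempty → l[A.card - 1]? = some (c A)

/-- `(M,c)` is a member of the coloring class `K(W)`: `c` is an `L`-coloring of `M`
and every finite nonempty monochromatic subset of `M` has its diagram in `W`. -/
def MemK (W : Set (List L.Color)) (M : Set σ) (c : Finset σ → L.Color) : Prop :=
  L.IsColoring M c ∧
    ∀ B : Finset σ, ↑B ⊆ M → B.Nonempty → L.Mono c ↑B → ∃ l ∈ W, L.DiagramOf c B l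

/-- `(M,c)` is a substructure of `(N,c')`. -/
def Substruct (M : Set σ) (c : Finset σ → L.Color) (N : Set σ)
    (c' : Finset σ → L.Color) : Prop :=
  M ⊆ N ∧ ∀ A : Finset σ, ↑A ⊆ M → A.Nonempty → c A = c' A

/-- `f` is an embedding of `(M,c)` into `(N,c')`. -/
def Emb (f : σ → τ) (M : Set σ) (c : Finset σ → L.Color) (N : Set τ)
    (c' : Finset τ → L.Color) : Prop :=
  Set.InjOn f M ∧ f '' M ⊆ N ∧
    ∀ A : Finset σ, ↑A ⊆ M → A.Nonempty →
      haveI := Classical.decEq τ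
      c' (A.image f) = c A

/-- `K(W)` has the amalgamation property for models of size `lam`. -/
def HasAPAt (W : Set (List L.Color)) (lam : Cardinal.{u}) : Prop :=
  ∀ (σ : Type u) (M₀ M₁ M₂ : Set σ) (c₀ c₁ c₂ : Finset σ → L.Color),
    L.MemK W M₀ c₀ → L.MemK W M₁ c₁ → L.MemK W M₂ c₂ →
    Cardinal.mk ↥M₀ = lam → Cardinal.mk ↥M₁ = lam → Cardinal.mk ↥M₂ = lam →
    L.Substruct M₀ c₀ M₁ c₁ → L.Substruct M₀ c₀ M₂ c₂ →
    ∃ (τ : Type u) (N : Set τ) (c : Finset τ → L.Color) (f₁ f₂ : σ → τ),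
      L.MemK W N c ∧ L.Emb f₁ M₁ c₁ N c ∧ L.Emb f₂ M₂ c₂ N c ∧
      ∀ x ∈ M₀, f₁ x = f₂ x

/-- `K(W)` has the disjoint amalgamation property for models of size `lam`. -/
def HasDAPAt (W : Set (List L.Color)) (lam : Cardinal.{u}) : Prop :=
  ∀ (σ : Type u) (M₀ M₁ M₂ : Set σ) (c₀ c₁ c₂ : Finset σ → L.Color),
    L.MemK W M₀ c₀ → L.MemK W M₁ c₁ → L.MemK W M₂ c₂ →
    Cardinal.mk ↥M₀ = lam → Cardinal.mk ↥M₁ = lam → Cardinal.mk ↥M₂ = lam →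
    L.Substruct M₀ c₀ M₁ c₁ → L.Substruct M₀ c₀ M₂ c₂ →
    ∃ (τ : Type u) (N : Set τ) (c : Finset τ → L.Color) (f₁ f₂ : σ → τ),
      L.MemK W N c ∧ L.Emb f₁ M₁ c₁ N c ∧ L.Emb f₂ M₂ c₂ N c ∧
      (∀ x ∈ M₀, f₁ x = f₂ x) ∧ f₁ '' M₁ ∩ f₂ '' M₂ = f₁ '' M₀

end ColoringLanguage

open Cardinal Set

lemma bethF_zero (κ : Cardinal.{u}) : bethF κ 0 = κ := Ordinal.limitRecOn_zero ..

lemma bethF_succ (κ : Cardinal.{u}) (o : Ordinal.{u}) :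
    bethF κ (Order.succ o) = 2 ^ bethF κ o := Ordinal.limitRecOn_succ ..

lemma bethF_limit (κ : Cardinal.{u}) {o : Ordinal.{u}} (h : Order.IsSuccLimit o) :
    bethF κ o = ⨆ b : Set.Iio o, bethF κ b.1 := Ordinal.limitRecOn_limit _ _ _ _ h

lemma bethF_bddAbove (κ : Cardinal.{u}) (o : Ordinal.{u}) :
    BddAbove (Set.range fun b : Set.Iio o => bethF κ b.1) :=
  Cardinal.bddAbove_of_small

lemma bethF_le_bethF (κ : Cardinal.{u}) : ∀ {o₂ o₁ : Ordinal.{u}}, o₁ ≤ o₂ →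
    bethF κ o₁ ≤ bethF κ o₂ := by
  intro o₂
  induction o₂ using Ordinal.limitRecOn with
  | zero => intro o₁ h; rw [nonpos_iff_eq_zero.mp h]
  | add_one o ih =>
    intro o₁ h
    rw [Ordinal.add_one_eq_succ] at h ⊢
    rcases (Order.le_succ_iff_eq_or_le.mp h) with h | h
    · rw [h]
    · exact (ih h).trans (by rw [bethF_succ]; exact (cantor _).le)
  | limit o hlim ih =>
    intro o₁ h
    rcases eq_or_lt_of_le h with h | h
    · rw [h]
    · rw [bethF_limit κ hlim]
      exact le_ciSup (bethF_bddAbove κ o) (⟨o₁, h⟩ : Set.Iio o)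

lemma self_le_bethF (κ : Cardinal.{u}) (o : Ordinal.{u}) : κ ≤ bethF κ o :=
  le_trans (bethF_zero κ).ge (bethF_le_bethF κ zero_le)

lemma bethF_lt_bethF (κ : Cardinal.{u}) {o₁ o₂ : Ordinal.{u}} (h : o₁ < o₂) :
    bethF κ o₁ < bethF κ o₂ :=
  (cantor _).trans_le (by rw [← bethF_succ]; exact bethF_le_bethF κ (Order.succ_le_of_lt h))

lemma succ_bethF_le (κ : Cardinal.{u}) {o₁ o₂ : Ordinal.{u}} (h : o₁ < o₂) :
    Order.succ (bethF κ o₁) ≤ bethF κ o₂ :=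
  Order.succ_le_of_lt (bethF_lt_bethF κ h)

lemma bethF_bethF (κ : Cardinal.{u}) (δ : Ordinal.{u}) (n : ℕ) :
    bethF (bethF κ δ) (n : Ordinal) = bethF κ (δ + n) := by
  induction n with
  | zero => simp [bethF_zero]
  | succ n ih =>
    have : ((n + 1 : ℕ) : Ordinal) = Order.succ (n : Ordinal) := by
      push_cast; exact Ordinal.add_one_eq_succ _
    rw [this, bethF_succ, ih, ← bethF_succ, ← Ordinal.add_one_eq_succ, ← Ordinal.add_one_eq_succ,
      add_assoc]
-- counting lemmas and pigeonhole
section Counting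
variable {α K : Type u}

lemma mk_finset_le (β : Type u) : #(Finset β) ≤ max #β ℵ₀ := by
  classical
  rcases isEmpty_or_nonempty β with hβ | hβ
  · have : Subsingleton (Finset β) := ⟨fun s t => by ext a; exact (hβ.false a).elim⟩
    exact (Cardinal.mk_le_aleph0).trans (le_max_right _ _)
  · have hsurj : Function.Surjective (fun l : List β => l.toFinset) := by
      intro s; exact ⟨s.toList, Finset.toList_toFinset s⟩
    exact (Cardinal.mk_le_of_surjective hsurj).trans
      (le_of_eq (Cardinal.mk_list_eq_max_mk_aleph0 β))

lemma mk_finsetSubset_le (A : Set α) : #{S : Finset α // ↑S ⊆ A} ≤ max #↥A ℵ₀ := by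
  classical
  have key : ∀ S : {S : Finset α // ↑S ⊆ A},
      Finset.image (Subtype.val : ↥A → α) (S.1.preimage (Subtype.val : ↥A → α) Subtype.val_injective.injOn) = S.1 := by
    intro S
    ext a
    simp only [Finset.mem_image, Finset.mem_preimage]
    constructor
    · rintro ⟨⟨b, hb⟩, hmem, rfl⟩; exact hmem
    · intro ha; exact ⟨⟨a, S.2 ha⟩, ha, rfl⟩
  have hf : Function.Injective
      (fun S : {S : Finset α // ↑S ⊆ A} =>
        S.1.preimage (Subtype.val : ↥A → α) Subtype.val_injective.injOn) := by
    intro S T h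
    apply Subtype.ext
    rw [← key S, ← key T]
    simp only at h
    rw [h]
  exact (Cardinal.mk_le_of_injective hf).trans (by
    simpa using mk_finset_le (↥A))

lemma pigeon (f : α → K) {μ : Cardinal.{u}} (hμ : ℵ₀ ≤ μ) (hK : #K ≤ μ)
    (h : Order.succ μ ≤ #α) : ∃ k, Order.succ μ ≤ #(f ⁻¹' {k}) := by
  by_contra hcon
  push_neg at hcon
  have hall : ∀ k, #(f ⁻¹' {k}) ≤ μ := fun k => Order.lt_succ_iff.mp (hcon k)
  have huniv : (⋃ k, f ⁻¹' {k}) = Set.univ := by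
    ext a; simp only [Set.mem_iUnion, Set.mem_preimage, Set.mem_singleton_iff,
      Set.mem_univ, iff_true]
    exact ⟨f a, rfl⟩
  have : #α ≤ μ := by
    have h1 : #↥(⋃ k, f ⁻¹' {k}) ≤ #K * ⨆ k, #(f ⁻¹' {k}) := Cardinal.mk_iUnion_le _
    have h2 : (⨆ k, #(f ⁻¹' {k})) ≤ μ := by
      rcases isEmpty_or_nonempty K with hK' | hK'
      · simp [iSup_of_empty]
      · exact ciSup_le' hall
    have h3 : #↥(⋃ k, f ⁻¹' {k}) = #α := by rw [huniv]; exact Cardinal.mk_univ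
    calc #α = #↥(⋃ k, f ⁻¹' {k}) := h3.symm
      _ ≤ #K * ⨆ k, #(f ⁻¹' {k}) := h1
      _ ≤ μ * μ := mul_le_mul' hK h2
      _ = μ := Cardinal.mul_eq_self hμ
  exact absurd (h.trans this) (not_le.mpr (Order.lt_succ_of_le le_rfl))

end Counting
section EndHom

open scoped Classical

variable {α K : Type u}

/-- The type of `y` over `A`: colors of `S ∪ {y}` for finite `S ⊆ A`. -/
noncomputable def tpf (d : Finset α → K) (A : Set α) (y : α) : {S : Finset α // ↑S ⊆ A} → K :=
  fun S => d (insert y S.1)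

lemma tpf_card_le (K : Type u) {ν : Cardinal.{u}} (hν : ℵ₀ ≤ ν) (hK : #K ≤ ν)
    (A : Set α) (hA : #↥A ≤ ν) : #({S : Finset α // ↑S ⊆ A} → K) ≤ 2 ^ ν := by
  rw [← Cardinal.power_def]
  have he : #{S : Finset α // ↑S ⊆ A} ≤ ν :=
    (mk_finsetSubset_le A).trans (max_le hA hν)
  have h2 : (2 : Cardinal) ^ ν ≠ 0 := (Cardinal.power_pos _ (by norm_num)).ne'
  calc #K ^ #{S : Finset α // ↑S ⊆ A}
      ≤ (2 ^ ν) ^ #{S : Finset α // ↑S ⊆ A} :=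
        Cardinal.power_le_power_right (hK.trans (Cardinal.cantor ν).le)
    _ ≤ (2 ^ ν) ^ ν := Cardinal.power_le_power_left h2 he
    _ = 2 ^ (ν * ν) := (Cardinal.power_mul ..).symm
    _ = 2 ^ ν := by rw [Cardinal.mul_eq_self hν]

variable (Y : Set α) (d : Finset α → K) (y₀ : α)

noncomputable def pickw (A : Set α) (t : {S : Finset α // ↑S ⊆ A} → K) : α :=
  if h : ∃ y', y' ∈ Y \ A ∧ tpf d A y' = t then h.choose else y₀

lemma pickw_spec {A : Set α} {t : {S : Finset α // ↑S ⊆ A} → K}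
    (h : ∃ y', y' ∈ Y \ A ∧ tpf d A y' = t) :
    pickw Y d y₀ A t ∈ Y \ A ∧ tpf d A (pickw Y d y₀ A t) = t := by
  rw [pickw, dif_pos h]
  exact h.choose_spec

lemma pickw_mem_Y (hy₀ : y₀ ∈ Y) (A : Set α) (t : {S : Finset α // ↑S ⊆ A} → K) :
    pickw Y d y₀ A t ∈ Y := by
  rw [pickw]
  split
  · next h => exact h.choose_spec.1.1
  · exact hy₀

variable (ν : Cardinal.{u})

/-- The range of a `ν`-indexed family in `N'`, as a subset of `α`. -/
def rngOf (N' : Set α) (g : ν.ord.ToType → ↥N') : Set α := Set.range fun i => (g i).1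

lemma rngOf_subset (N' : Set α) (g : ν.ord.ToType → ↥N') : rngOf ν N' g ⊆ N' := by
  rintro a ⟨i, rfl⟩; exact (g i).2

lemma rngOf_card (N' : Set α) (g : ν.ord.ToType → ↥N') : #↥(rngOf ν N' g) ≤ ν := by
  have := Cardinal.mk_range_le (f := fun i => (g i).1)
  rwa [Cardinal.mk_toType, Cardinal.card_ord] at this

/-- One closure step: add witnesses for all types over small subsets of `N'`. -/
noncomputable def clStep (N' : Set α) : Set α :=
  N' ∪ (pickw Y d y₀ ∅ '' (tpf d ∅ '' Y)) ∪
    ⋃ g : (ν.ord.ToType → ↥N'),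
      pickw Y d y₀ (rngOf ν N' g) '' (tpf d (rngOf ν N' g) '' (Y \ rngOf ν N' g))

lemma subset_clStep (N' : Set α) : N' ⊆ clStep Y d y₀ ν N' :=
  subset_union_left.trans subset_union_left

lemma clStep_subset (hy₀ : y₀ ∈ Y) (N' : Set α) (hN' : N' ⊆ Y) :
    clStep Y d y₀ ν N' ⊆ Y := by
  rintro a (⟨h | h⟩ | h)
  · exact hN' h
  · rcases h with ⟨t, _, rfl⟩; exact pickw_mem_Y Y d y₀ hy₀ _ _
  · simp only [Set.mem_iUnion] at h
    rcases h with ⟨g, t, _, rfl⟩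
    exact pickw_mem_Y Y d y₀ hy₀ _ _

lemma image_image_card_le {ν : Cardinal.{u}} (hν : ℵ₀ ≤ ν) (hK : #K ≤ ν)
    (A : Set α) (hA : #↥A ≤ ν) (X : Set α) :
    #↥(pickw Y d y₀ A '' (tpf d A '' X)) ≤ 2 ^ ν := by
  refine (Cardinal.mk_image_le).trans ?_
  refine le_trans ?_ (tpf_card_le K hν hK A hA)
  exact le_trans (Cardinal.mk_le_mk_of_subset (Set.subset_univ _)) (le_of_eq Cardinal.mk_univ)

lemma clStep_card {ν : Cardinal.{u}} (hν : ℵ₀ ≤ ν) (hK : #K ≤ ν)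
    (N' : Set α) (hN' : #↥N' ≤ 2 ^ ν) : #↥(clStep Y d y₀ ν N') ≤ 2 ^ ν := by
  have h2 : ℵ₀ ≤ (2 : Cardinal) ^ ν := hν.trans ((Cardinal.cantor ν).le)
  have hb : #↥(pickw Y d y₀ ∅ '' (tpf d ∅ '' Y)) ≤ 2 ^ ν :=
    image_image_card_le Y d y₀ hν hK ∅ (by simp) Y
  have hu : #↥(⋃ g : (ν.ord.ToType → ↥N'),
      pickw Y d y₀ (rngOf ν N' g) '' (tpf d (rngOf ν N' g) '' (Y \ rngOf ν N' g))) ≤ 2 ^ ν := by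
    refine (Cardinal.mk_iUnion_le _).trans ?_
    have hι : #(ν.ord.ToType → ↥N') ≤ 2 ^ ν := by
      rw [← Cardinal.power_def, Cardinal.mk_toType, Cardinal.card_ord]
      calc #↥N' ^ ν ≤ (2 ^ ν) ^ ν :=
            Cardinal.power_le_power_right hN'
        _ = 2 ^ (ν * ν) := (Cardinal.power_mul ..).symm
        _ = 2 ^ ν := by rw [Cardinal.mul_eq_self hν]
    have hs : (⨆ g : (ν.ord.ToType → ↥N'),
        #↥(pickw Y d y₀ (rngOf ν N' g) '' (tpf d (rngOf ν N' g) '' (Y \ rngOf ν N' g)))) ≤ 2 ^ ν := by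
      rcases isEmpty_or_nonempty (ν.ord.ToType → ↥N') with h | h
      · simp [iSup_of_empty]
      · exact ciSup_le' fun g =>
          image_image_card_le Y d y₀ hν hK _ (rngOf_card ν N' g) _
    exact le_trans (mul_le_mul' hι hs) (le_of_eq (Cardinal.mul_eq_self h2))
  refine le_trans (Cardinal.mk_union_le _ _) ?_
  refine le_trans (add_le_add_left (Cardinal.mk_union_le _ _) _) ?_
  refine le_trans (add_le_add (add_le_add hN' hb) hu) ?_
  rw [Cardinal.add_eq_self h2, Cardinal.add_eq_self h2]

lemma clStep_closure {ν : Cardinal.{u}} (N' A : Set α) (hAN : A ⊆ N') (hA : #↥A ≤ ν)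
    (y : α) (hy : y ∈ Y \ A) :
    ∃ y', y' ∈ Y \ A ∧ y' ∈ clStep Y d y₀ ν N' ∧ tpf d A y' = tpf d A y := by
  rcases Set.eq_empty_or_nonempty A with rfl | hne
  · have hex : ∃ y', y' ∈ Y \ (∅ : Set α) ∧ tpf d ∅ y' = tpf d ∅ y := ⟨y, hy, rfl⟩
    obtain ⟨h1, h2⟩ := pickw_spec Y d y₀ hex
    refine ⟨pickw Y d y₀ ∅ (tpf d ∅ y), h1, ?_, h2⟩
    exact subset_union_left (Set.mem_union_right _ ⟨tpf d ∅ y, ⟨y, hy.1, rfl⟩, rfl⟩)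
  · -- represent A as the range of a `ν`-indexed family in `N'`
    have hAle : #↥A ≤ #(ν.ord.ToType) := by
      rwa [Cardinal.mk_toType, Cardinal.card_ord]
    obtain ⟨f⟩ := Cardinal.le_def .. |>.mp hAle
    haveI : Nonempty ↥A := hne.to_subtype
    have hsurj : Function.Surjective (Function.invFun (⇑f)) :=
      Function.invFun_surjective f.injective
    set g : ν.ord.ToType → ↥N' := fun i => ⟨(Function.invFun (⇑f) i).1,
      hAN (Function.invFun (⇑f) i).2⟩ with hg
    have hAg : rngOf ν N' g = A := by
      ext a
      constructor
      · rintro ⟨i, rfl⟩; exact (Function.invFun (⇑f) i).2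
      · intro ha
        obtain ⟨i, hi⟩ := hsurj ⟨a, ha⟩
        exact ⟨i, by rw [hg]; simp [hi]⟩
    rw [← hAg] at hy ⊢
    have hex : ∃ y', y' ∈ Y \ rngOf ν N' g ∧ tpf d (rngOf ν N' g) y' = tpf d (rngOf ν N' g) y :=
      ⟨y, hy, rfl⟩
    obtain ⟨h1, h2⟩ := pickw_spec Y d y₀ hex
    refine ⟨_, h1, ?_, h2⟩
    refine Set.mem_union_right _ ?_
    exact Set.mem_iUnion.mpr ⟨g, ⟨_, ⟨y, hy, rfl⟩, rfl⟩⟩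

end EndHom
section Chain

open scoped Classical

variable {α K : Type u} (Y : Set α) (d : Finset α → K) (y₀ : α) (ν : Cardinal.{u})

noncomputable def chainF : (Order.succ ν).ord.ToType → Set α :=
  (wellFounded_lt (α := (Order.succ ν).ord.ToType)).fix
    (fun ξ IH => clStep Y d y₀ ν (⋃ η : {η : (Order.succ ν).ord.ToType // η < ξ}, IH η.1 η.2))

lemma chainF_eq (ξ : (Order.succ ν).ord.ToType) :
    chainF Y d y₀ ν ξ =
      clStep Y d y₀ ν (⋃ η : {η : (Order.succ ν).ord.ToType // η < ξ}, chainF Y d y₀ ν η.1) :=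
  WellFounded.fix_eq _ _ _

lemma chainF_subset_Y (hy₀ : y₀ ∈ Y) (ξ : (Order.succ ν).ord.ToType) :
    chainF Y d y₀ ν ξ ⊆ Y := by
  induction ξ using WellFoundedLT.induction with
  | ind ξ IH =>
    rw [chainF_eq]
    refine clStep_subset Y d y₀ ν hy₀ _ ?_
    exact Set.iUnion_subset fun η => IH η.1 η.2

lemma chainF_mono (hy₀ : y₀ ∈ Y) {η ξ : (Order.succ ν).ord.ToType} (h : η < ξ) :
    chainF Y d y₀ ν η ⊆ chainF Y d y₀ ν ξ := by
  rw [chainF_eq Y d y₀ ν ξ]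
  refine subset_trans ?_ (subset_clStep Y d y₀ ν _)
  exact Set.subset_iUnion_of_subset ⟨η, h⟩ le_rfl

lemma mk_Iio_toType_le {c : Cardinal.{u}} (ξ : (Order.succ c).ord.ToType) :
    #{η : (Order.succ c).ord.ToType // η < ξ} ≤ c := by
  have h := Cardinal.card_typein_toType_lt (Order.succ c) ξ
  have h2 := @Ordinal.card_typein ((Order.succ c).ord.ToType) (· < ·) isWellOrder_lt ξ
  exact Order.lt_succ_iff.mp (h2.trans_lt h)

lemma chainF_card (hν : ℵ₀ ≤ ν) (hK : #K ≤ ν) (ξ : (Order.succ ν).ord.ToType) :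
    #↥(chainF Y d y₀ ν ξ) ≤ 2 ^ ν := by
  induction ξ using WellFoundedLT.induction with
  | ind ξ IH =>
    rw [chainF_eq]
    refine clStep_card Y d y₀ hν hK _ ?_
    refine (Cardinal.mk_iUnion_le _).trans ?_
    have h1 : #{η : (Order.succ ν).ord.ToType // η < ξ} ≤ 2 ^ ν :=
      (mk_Iio_toType_le ξ).trans ((Cardinal.cantor ν).le)
    have h2 : (⨆ η : {η : (Order.succ ν).ord.ToType // η < ξ}, #↥(chainF Y d y₀ ν η.1)) ≤ 2 ^ ν := by
      rcases isEmpty_or_nonempty {η : (Order.succ ν).ord.ToType // η < ξ} with h | h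
      · simp [iSup_of_empty]
      · exact ciSup_le' fun η => IH η.1 η.2
    refine le_trans (mul_le_mul' h1 h2) (le_of_eq ?_)
    exact Cardinal.mul_eq_self (hν.trans ((Cardinal.cantor ν).le))

noncomputable def bigN : Set α := ⋃ ξ : (Order.succ ν).ord.ToType, chainF Y d y₀ ν ξ

lemma bigN_subset_Y (hy₀ : y₀ ∈ Y) : bigN Y d y₀ ν ⊆ Y :=
  Set.iUnion_subset fun ξ => chainF_subset_Y Y d y₀ ν hy₀ ξ

lemma bigN_card (hν : ℵ₀ ≤ ν) (hK : #K ≤ ν) : #↥(bigN Y d y₀ ν) ≤ 2 ^ ν := by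
  refine (Cardinal.mk_iUnion_le _).trans ?_
  have h1 : #((Order.succ ν).ord.ToType) ≤ 2 ^ ν := by
    rw [Cardinal.mk_toType, Cardinal.card_ord]
    exact Order.succ_le_of_lt (Cardinal.cantor ν)
  have h2 : (⨆ ξ : (Order.succ ν).ord.ToType, #↥(chainF Y d y₀ ν ξ)) ≤ 2 ^ ν := by
    rcases isEmpty_or_nonempty ((Order.succ ν).ord.ToType) with h | h
    · simp [iSup_of_empty]
    · exact ciSup_le' fun ξ => chainF_card Y d y₀ ν hν hK ξ
  refine le_trans (mul_le_mul' h1 h2) (le_of_eq ?_)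
  exact Cardinal.mul_eq_self (hν.trans ((Cardinal.cantor ν).le))

lemma bigN_closure (hy₀ : y₀ ∈ Y) (hν : ℵ₀ ≤ ν) (A : Set α) (hAN : A ⊆ bigN Y d y₀ ν)
    (hA : #↥A ≤ ν) (y : α) (hy : y ∈ Y \ A) :
    ∃ y', y' ∈ Y \ A ∧ y' ∈ bigN Y d y₀ ν ∧ tpf d A y' = tpf d A y := by
  classical
  have hreg : ((Order.succ ν).ord).cof = Order.succ ν := (Cardinal.isRegular_succ hν).cof_eq
  have hlim : Order.IsSuccLimit ((Order.succ ν).ord) :=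
    Cardinal.isSuccLimit_ord (hν.trans (Order.le_succ ν))
  set e := Ordinal.ToType.mk (o := (Order.succ ν).ord) with he
  -- for each a ∈ A pick a level
  have hlev : ∀ a : ↥A, ∃ ξ, (a : α) ∈ chainF Y d y₀ ν ξ := by
    intro a
    have := hAN a.2
    simpa [bigN, Set.mem_iUnion] using this
  choose lev hlevmem using hlev
  -- bound the levels
  have hbd : (⨆ a : ↥A, ((e.symm (lev a)) : Ordinal)) < (Order.succ ν).ord := by
    apply Ordinal.iSup_lt_ord
    · rw [hreg]
      exact hA.trans_lt (Order.lt_succ ν)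
    · intro a
      exact (e.symm (lev a)).2
  have hbd1 : Order.succ (⨆ a : ↥A, ((e.symm (lev a)) : Ordinal)) < (Order.succ ν).ord :=
    hlim.succ_lt hbd
  set ξstar : (Order.succ ν).ord.ToType := e ⟨_, hbd1⟩ with hξstar
  have hlt : ∀ a : ↥A, lev a < ξstar := by
    intro a
    have h1 : e.symm (lev a) < e.symm ξstar := by
      rw [hξstar, OrderIso.symm_apply_apply]
      refine Subtype.mk_lt_mk.mpr ?_
      exact Order.lt_succ_of_le (Ordinal.le_iSup _ a)
    exact (OrderIso.lt_iff_lt e.symm).mp h1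
  have hsub : A ⊆ ⋃ η : {η : (Order.succ ν).ord.ToType // η < ξstar}, chainF Y d y₀ ν η.1 := by
    intro a ha
    exact Set.mem_iUnion.mpr ⟨⟨lev ⟨a, ha⟩, hlt ⟨a, ha⟩⟩, hlevmem ⟨a, ha⟩⟩
  obtain ⟨y', hy'1, hy'2, hy'3⟩ := clStep_closure Y d y₀ _ A hsub hA y hy
  refine ⟨y', hy'1, ?_, hy'3⟩
  have : y' ∈ chainF Y d y₀ ν ξstar := by rw [chainF_eq]; exact hy'2
  exact Set.mem_iUnion.mpr ⟨ξstar, this⟩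

end Chain
section XFun

open scoped Classical

variable {α K : Type u} (Y : Set α) (d : Finset α → K) (y₀ ystar : α) (ν : Cardinal.{u})

noncomputable def pickw2 (A : Set α) : α :=
  if h : ∃ y', (y' ∈ Y \ A ∧ y' ∈ bigN Y d y₀ ν) ∧ tpf d A y' = tpf d A ystar
  then h.choose else y₀

noncomputable def xfun : (Order.succ ν).ord.ToType → α :=
  (wellFounded_lt (α := (Order.succ ν).ord.ToType)).fix
    (fun ξ IH => pickw2 Y d y₀ ystar ν
      (Set.range fun η : {η : (Order.succ ν).ord.ToType // η < ξ} => IH η.1 η.2))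

lemma xfun_eq (ξ : (Order.succ ν).ord.ToType) :
    xfun Y d y₀ ystar ν ξ = pickw2 Y d y₀ ystar ν (xfun Y d y₀ ystar ν '' {η | η < ξ}) := by
  rw [xfun, WellFounded.fix_eq]
  congr 1
  ext a
  simp only [Set.mem_range, Set.mem_image, Set.mem_setOf_eq, Subtype.exists]
  exact ⟨fun ⟨η, hη, h⟩ => ⟨η, hη, h⟩, fun ⟨η, hη, h⟩ => ⟨η, hη, h⟩⟩

lemma xfun_spec (hy₀ : y₀ ∈ Y) (hν : ℵ₀ ≤ ν) (hystar : ystar ∈ Y ∧ ystar ∉ bigN Y d y₀ ν) :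
    ∀ ξ : (Order.succ ν).ord.ToType,
      xfun Y d y₀ ystar ν ξ ∈ Y \ (xfun Y d y₀ ystar ν '' {η | η < ξ}) ∧
      xfun Y d y₀ ystar ν ξ ∈ bigN Y d y₀ ν ∧
      tpf d (xfun Y d y₀ ystar ν '' {η | η < ξ}) (xfun Y d y₀ ystar ν ξ) =
        tpf d (xfun Y d y₀ ystar ν '' {η | η < ξ}) ystar := by
  intro ξ
  induction ξ using WellFoundedLT.induction with
  | ind ξ IH =>
    set A := xfun Y d y₀ ystar ν '' {η | η < ξ} with hA
    have hAN : A ⊆ bigN Y d y₀ ν := by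
      rintro a ⟨η, hη, rfl⟩
      exact (IH η hη).2.1
    have hAcard : #↥A ≤ ν := by
      refine le_trans (Cardinal.mk_image_le ..) ?_
      have : #↥{η : (Order.succ ν).ord.ToType | η < ξ} =
          #{η : (Order.succ ν).ord.ToType // η < ξ} := rfl
      rw [this]
      exact mk_Iio_toType_le ξ
    have hystarA : ystar ∈ Y \ A := ⟨hystar.1, fun hmem => hystar.2 (hAN hmem)⟩
    obtain ⟨y', hy'1, hy'2, hy'3⟩ := bigN_closure Y d y₀ ν hy₀ hν A hAN hAcard ystar hystarA
    have hex : ∃ y'', (y'' ∈ Y \ A ∧ y'' ∈ bigN Y d y₀ ν) ∧ tpf d A y'' = tpf d A ystar :=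
      ⟨y', ⟨hy'1, hy'2⟩, hy'3⟩
    have heq : xfun Y d y₀ ystar ν ξ = pickw2 Y d y₀ ystar ν A := xfun_eq Y d y₀ ystar ν ξ
    rw [heq, pickw2, dif_pos hex]
    exact ⟨hex.choose_spec.1.1, hex.choose_spec.1.2, hex.choose_spec.2⟩

lemma endHom {α K : Type u} (Y : Set α) (d : Finset α → K) (ν : Cardinal.{u})
    (hν : ℵ₀ ≤ ν) (hK : #K ≤ ν) (hY : Order.succ (2 ^ ν) ≤ #↥Y) :
    ∃ (x : (Order.succ ν).ord.ToType → α) (y : α),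
      Function.Injective x ∧ Set.range x ⊆ Y ∧ y ∈ Y ∧ y ∉ Set.range x ∧
      ∀ (ξ : (Order.succ ν).ord.ToType) (S : Finset α), ↑S ⊆ x '' {η | η < ξ} →
        d (insert (x ξ) S) = d (insert y S) := by
  have hpos : (0 : Cardinal) < #↥Y :=
    lt_of_lt_of_le (Order.lt_succ_of_le zero_le) hY
  have hYne : Nonempty ↥Y := Cardinal.mk_ne_zero_iff.mp hpos.ne'
  obtain ⟨⟨y₀, hy₀⟩⟩ := hYne
  -- find ystar outside bigN
  have hNcard : #↥(bigN Y d y₀ ν) ≤ 2 ^ ν := bigN_card Y d y₀ ν hν hK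
  have hns : ¬ (Y ⊆ bigN Y d y₀ ν) := by
    intro hsub
    have : #↥Y ≤ 2 ^ ν := (Cardinal.mk_le_mk_of_subset hsub).trans hNcard
    exact absurd (hY.trans this) (not_le.mpr (Order.lt_succ_of_le le_rfl))
  obtain ⟨ystar, hystarY, hystarN⟩ := Set.not_subset.mp hns
  refine ⟨xfun Y d y₀ ystar ν, ystar, ?_, ?_, hystarY, ?_, ?_⟩
  · -- injectivity
    intro ξ η h
    by_contra hne
    rcases lt_or_gt_of_ne hne with hlt | hlt
    · exact (xfun_spec Y d y₀ ystar ν hy₀ hν ⟨hystarY, hystarN⟩ η).1.2 ⟨ξ, hlt, h⟩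
    · exact (xfun_spec Y d y₀ ystar ν hy₀ hν ⟨hystarY, hystarN⟩ ξ).1.2 ⟨η, hlt, h.symm⟩
  · rintro a ⟨ξ, rfl⟩
    exact (xfun_spec Y d y₀ ystar ν hy₀ hν ⟨hystarY, hystarN⟩ ξ).1.1
  · rintro ⟨ξ, hξ⟩
    exact hystarN (hξ ▸ (xfun_spec Y d y₀ ystar ν hy₀ hν ⟨hystarY, hystarN⟩ ξ).2.1)
  · intro ξ S hS
    have h3 := (xfun_spec Y d y₀ ystar ν hy₀ hν ⟨hystarY, hystarN⟩ ξ).2.2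
    have := congrFun h3 ⟨S, hS⟩
    simpa [tpf] using this

end XFun
section ER

open scoped Classical

theorem erdosRado {α K : Type u} (μ : Cardinal.{u}) (hμ : ℵ₀ ≤ μ) (hK : #K ≤ μ) :
    ∀ (n : ℕ) (Y : Set α) (d : Finset α → K),
      Order.succ (bethF μ (n : Ordinal)) ≤ #↥Y →
    ∃ (r : K) (Z : Set α), Z ⊆ Y ∧ Order.succ μ ≤ #↥Z ∧
      ∀ S : Finset α, ↑S ⊆ Z → S.card = n + 1 → d S = r := by
  intro n
  induction n with
  | zero =>
    intro Y d hY
    rw [Nat.cast_zero, bethF_zero] at hY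
    obtain ⟨k, hk⟩ := pigeon (fun y : ↥Y => d {y.1}) hμ hK hY
    refine ⟨k, {a | a ∈ Y ∧ d {a} = k}, fun a ha => ha.1, ?_, ?_⟩
    · refine hk.trans (Cardinal.mk_le_of_injective (f := fun y => ⟨y.1.1, y.1.2, y.2⟩) ?_)
      intro y z h
      simp only [Subtype.mk.injEq] at h
      exact Subtype.ext (Subtype.ext h)
    · intro S hS hcard
      obtain ⟨a, ha⟩ := Finset.card_eq_one.mp hcard
      subst ha
      exact (hS (Finset.mem_singleton_self a)).2
  | succ n IH =>
    intro Y d hY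
    set ν := bethF μ (n : Ordinal) with hν_def
    have hνinf : ℵ₀ ≤ ν := hμ.trans (self_le_bethF μ _)
    have hKν : #K ≤ ν := hK.trans (self_le_bethF μ _)
    have hY' : Order.succ (2 ^ ν) ≤ #↥Y := by
      have : ((n + 1 : ℕ) : Ordinal) = Order.succ (n : Ordinal) := by
        push_cast; exact Ordinal.add_one_eq_succ _
      rwa [this, bethF_succ] at hY
    obtain ⟨x, ystar, hxinj, hxrange, hystarY, hystarR, hend⟩ :=
      endHom Y d ν hνinf hKν hY'
    have hX'card : Order.succ (bethF μ (n : Ordinal)) ≤ #↥(Set.range x) := by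
      rw [Cardinal.mk_range_eq _ hxinj, Cardinal.mk_toType, Cardinal.card_ord]
    obtain ⟨r, Z, hZsub, hZcard, hZhom⟩ :=
      IH (Set.range x) (fun S => d (insert ystar S)) hX'card
    refine ⟨r, Z, hZsub.trans hxrange, hZcard, ?_⟩
    intro S hSZ hScard
    have hSr : ↑S ⊆ Set.range x := fun a ha => hZsub (hSZ ha)
    set J : Finset ((Order.succ ν).ord.ToType) := S.preimage x hxinj.injOn with hJ
    have hmemJ : ∀ ξ, ξ ∈ J ↔ x ξ ∈ S := fun ξ => Finset.mem_preimage
    have hJne : J.Nonempty := by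
      have hSne : S.Nonempty := Finset.card_pos.mp (by omega)
      obtain ⟨a, ha⟩ := hSne
      obtain ⟨ξ, rfl⟩ := hSr ha
      exact ⟨ξ, (hmemJ ξ).mpr ha⟩
    set ξm := J.max' hJne with hξm
    have hxm : x ξm ∈ S := (hmemJ ξm).mp (J.max'_mem hJne)
    set S' := S.erase (x ξm) with hS'
    have hS'sub : ↑S' ⊆ x '' {η | η < ξm} := by
      intro a ha
      have haS : a ∈ S := Finset.mem_of_mem_erase ha
      have hane : a ≠ x ξm := Finset.ne_of_mem_erase ha
      obtain ⟨ξ, rfl⟩ := hSr haS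
      have hξJ : ξ ∈ J := (hmemJ ξ).mpr haS
      have hξle : ξ ≤ ξm := J.le_max' ξ hξJ
      have hξne : ξ ≠ ξm := fun h => hane (by rw [h])
      exact ⟨ξ, lt_of_le_of_ne hξle hξne, rfl⟩
    have hS'card : S'.card = n + 1 := by
      rw [hS', Finset.card_erase_of_mem hxm, hScard]
      omega
    have h1 : d S = d (insert (x ξm) S') := by rw [hS', Finset.insert_erase hxm]
    have h2 : d (insert (x ξm) S') = d (insert ystar S') := hend ξm S' hS'sub
    have h3 : d (insert ystar S') = r :=
      hZhom S' (fun a ha => hSZ (Finset.mem_of_mem_erase ha)) hS'card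
    rw [h1, h2, h3]

end ER
section BGc

open Ordinal in
/-- The cardinal scale used for the rank descent. -/
noncomputable def BGc (κ : Cardinal.{u}) (γ : Ordinal.{u}) (n : ℕ) : Cardinal.{u} :=
  bethF κ (Ordinal.omega0 * (γ + 1) + n)

lemma BGc_mono (κ : Cardinal.{u}) {β γ : Ordinal.{u}} (h : β ≤ γ) (n : ℕ) :
    BGc κ β n ≤ BGc κ γ n :=
  bethF_le_bethF κ (add_le_add_left (mul_le_mul_right (add_le_add_left h 1) _) _)

lemma self_le_BGc (κ : Cardinal.{u}) (γ : Ordinal.{u}) (n : ℕ) : κ ≤ BGc κ γ n :=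
  self_le_bethF κ _

lemma aleph0_le_BGc {κ : Cardinal.{u}} (hκ : ℵ₀ ≤ κ) (γ : Ordinal.{u}) (n : ℕ) :
    ℵ₀ ≤ BGc κ γ n := hκ.trans (self_le_BGc κ γ n)

lemma BGc_step (κ : Cardinal.{u}) {β γ : Ordinal.{u}} (h : β < γ) (n : ℕ) :
    Order.succ (bethF (BGc κ β (n + 1)) (n : Ordinal)) ≤ BGc κ γ n := by
  rw [BGc, bethF_bethF]
  refine succ_bethF_le κ ?_
  calc Ordinal.omega0 * (β + 1) + ((n + 1 : ℕ) : Ordinal) + (n : Ordinal)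
      = Ordinal.omega0 * (β + 1) + (((n + 1 : ℕ) : Ordinal) + (n : Ordinal)) := by
        rw [add_assoc]
    _ < Ordinal.omega0 * (β + 1) + Ordinal.omega0 := by
        refine add_lt_add_right ?_ _
        rw [← Nat.cast_add]
        exact Ordinal.nat_lt_omega0 _
    _ = Ordinal.omega0 * (β + 1 + 1) := (mul_add_one Ordinal.omega0 (β + 1)).symm
    _ ≤ Ordinal.omega0 * (γ + 1) := by
        refine mul_le_mul_right ?_ _
        exact add_le_add_left (Order.add_one_le_iff.mpr h) 1
    _ ≤ Ordinal.omega0 * (γ + 1) + (n : Ordinal) := le_self_add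

lemma BGc_le_lam {κ : Cardinal.{u}} (hκ : ℵ₀ ≤ κ) {γ : Ordinal.{u}}
    (hγ : γ < (Order.succ κ).ord) (n : ℕ) :
    BGc κ γ n ≤ bethF κ (Order.succ κ).ord := by
  refine bethF_le_bethF κ (le_of_lt ?_)
  rw [Cardinal.lt_ord]
  have hcard : γ.card ≤ κ := Order.lt_succ_iff.mp (Cardinal.lt_ord.mp hγ)
  have h1 : (Ordinal.omega0 * (γ + 1) + (n : Ordinal)).card ≤ κ := by
    rw [Ordinal.card_add, Ordinal.card_mul, Ordinal.card_add]
    have hω : (Ordinal.omega0).card = ℵ₀ := Ordinal.card_omega0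
    have hone : (1 : Ordinal).card = 1 := Ordinal.card_one
    rw [hω, hone]
    have hn : ((n : Ordinal)).card ≤ κ := by
      rw [Ordinal.card_nat]
      exact le_trans (le_of_lt (Cardinal.nat_lt_aleph0 n)) hκ
    have hγ1 : γ.card + 1 ≤ κ := by
      refine Cardinal.add_le_of_le hκ hcard (le_trans ?_ hκ)
      exact Cardinal.one_le_aleph0
    have hmul : ℵ₀ * (γ.card + 1) ≤ κ := by
      calc ℵ₀ * (γ.card + 1) ≤ κ * κ := mul_le_mul' hκ hγ1
        _ = κ := Cardinal.mul_eq_self hκ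
    exact Cardinal.add_le_of_le hκ hmul hn
  exact lt_of_le_of_lt h1 (Order.lt_succ_of_le le_rfl)

end BGc

section NMono

open scoped Classical

variable {σ : Type u} (L : ColoringLanguage.{u}) (M : Set σ) (c : Finset σ → L.Color)

/-- `Y` is `n`-monochromatic with level diagram `l`: every nonempty subset of `Y` of
size at most `n` gets the color prescribed by `l` at its size. -/
def NMonoP (n : ℕ) (l : List L.Color) (Y : Set σ) : Prop :=
  Y ⊆ M ∧ l.length = n ∧
    ∀ A : Finset σ, ↑A ⊆ Y → A.Nonempty → A.card ≤ n → l[A.card - 1]? = some (c A)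

lemma nmono_step {n : ℕ} {l : List L.Color} {Y : Set σ} (h : NMonoP L M c n l Y)
    (μ : Cardinal.{u}) (hμ : ℵ₀ ≤ μ) (hK : #L.Color ≤ μ)
    (hY : Order.succ (bethF μ (n : Ordinal)) ≤ #↥Y) :
    ∃ (r : L.Color) (Z : Set σ), Z ⊆ Y ∧ NMonoP L M c (n + 1) (l ++ [r]) Z ∧
      Order.succ μ ≤ #↥Z := by
  obtain ⟨r, Z, hZY, hZcard, hZhom⟩ := erdosRado μ hμ hK n Y c hY
  refine ⟨r, Z, hZY, ⟨hZY.trans h.1, by simp [h.2.1], ?_⟩, hZcard⟩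
  intro A hA hAne hAcard
  have hA1 : 1 ≤ A.card := Finset.card_pos.mpr hAne
  rcases Nat.lt_or_ge A.card (n + 1) with hlt | hge
  · have hidx : A.card - 1 < l.length := by rw [h.2.1]; omega
    rw [List.getElem?_append_left hidx]
    exact h.2.2 A (hA.trans hZY) hAne (by omega)
  · have hAc : A.card = n + 1 := le_antisymm hAcard hge
    have hidx : A.card - 1 = l.length := by rw [h.2.1]; omega
    rw [hidx, List.getElem?_concat_length, hZhom A hA hAc]

end NMono
section Branch

open scoped Classical

variable {σ : Type u} (L : ColoringLanguage.{u}) (W : Set (List L.Color))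
  (M : Set σ) (c : Finset σ → L.Color)

/-- `QQ γ l`: there is a large `n`-monochromatic set with level diagram `l`. -/
def QQ (γ : Ordinal.{u}) (l : List L.Color) : Prop :=
  ∃ Y : Set σ, NMonoP L M c l.length l Y ∧ BGc (#L.Color) γ l.length ≤ #↥Y

lemma QQ_mono {γ β : Ordinal.{u}} (h : β ≤ γ) {l : List L.Color} (hq : QQ L M c γ l) :
    QQ L M c β l := by
  obtain ⟨Y, h1, h2⟩ := hq
  exact ⟨Y, h1, (BGc_mono _ h _).trans h2⟩

lemma QQ_step (hκ : ℵ₀ ≤ #L.Color) {γ β : Ordinal.{u}} (h : β < γ) {l : List L.Color}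
    (hq : QQ L M c γ l) : ∃ r : L.Color, QQ L M c β (l ++ [r]) := by
  obtain ⟨Y, h1, h2⟩ := hq
  set n := l.length with hn
  have hY : Order.succ (bethF (BGc (#L.Color) β (n + 1)) (n : Ordinal)) ≤ #↥Y :=
    le_trans (BGc_step _ h n) h2
  obtain ⟨r, Z, hZY, hZmono, hZcard⟩ := nmono_step L M c h1
    (BGc (#L.Color) β (n + 1)) (aleph0_le_BGc hκ _ _) (self_le_BGc _ _ _) hY
  refine ⟨r, Z, ?_, ?_⟩
  · have hlen : (l ++ [r]).length = n + 1 := by simp [hn]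
    rw [hlen]; exact hZmono
  · have hlen : (l ++ [r]).length = n + 1 := by simp [hn]
    rw [hlen]
    exact le_trans (le_of_lt (Order.lt_succ_of_le le_rfl)) hZcard

lemma QQ_all_step (hκ : ℵ₀ ≤ #L.Color) {l : List L.Color}
    (h : ∀ γ < (Order.succ (#L.Color)).ord, QQ L M c γ l) :
    ∃ r : L.Color, ∀ γ < (Order.succ (#L.Color)).ord, QQ L M c γ (l ++ [r]) := by
  by_contra hcon
  push_neg at hcon
  choose γof hγof1 hγof2 using hcon
  have hlim : Order.IsSuccLimit ((Order.succ (#L.Color)).ord) :=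
    Cardinal.isSuccLimit_ord (hκ.trans (Order.le_succ _))
  have hreg : ((Order.succ (#L.Color)).ord).cof = Order.succ (#L.Color) :=
    (Cardinal.isRegular_succ hκ).cof_eq
  have hsup : (⨆ r : L.Color, γof r) < (Order.succ (#L.Color)).ord := by
    apply Ordinal.iSup_lt_ord
    · rw [hreg]; exact Order.lt_succ_of_le le_rfl
    · exact hγof1
  set ostar := ⨆ r : L.Color, γof r with hostar
  have hsucc : Order.succ ostar < (Order.succ (#L.Color)).ord := hlim.succ_lt hsup
  obtain ⟨r, hr⟩ := QQ_step L M c hκ (Order.lt_succ ostar) (h _ hsucc)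
  refine hγof2 r ?_
  exact QQ_mono L M c (Ordinal.le_iSup γof r) hr

/-- Main branch extraction: under the hypotheses of the theorem there is an infinite
branch through `W`. -/
lemma exists_branch (hW : L.IsAllowed W) (hκ : ℵ₀ ≤ #L.Color)
    {lam : Cardinal.{u}}
    (hlam : bethF (Cardinal.mk L.Color) (Order.succ (Cardinal.mk L.Color)).ord ≤ lam)
    (hmem : L.MemK W M c) (hM : #↥M = lam) :
    ∃ bw : ℕ → List L.Color, (∀ n, (bw n).length = n) ∧
      (∀ n, ∃ r, bw (n + 1) = bw n ++ [r]) ∧ (∀ n, bw n ∈ W) := by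
  -- base case of the rank predicate
  have base : ∀ γ < (Order.succ (#L.Color)).ord, QQ L M c γ ([] : List L.Color) := by
    intro γ hγ
    refine ⟨M, ⟨subset_rfl, rfl, ?_⟩, ?_⟩
    · intro A hA hAne hAcard
      simp only [List.length_nil, Nat.le_zero] at hAcard
      exact absurd hAcard (Finset.card_pos.mpr hAne).ne'
    · rw [hM]
      simp only [List.length_nil]
      exact le_trans (by simpa using BGc_le_lam hκ hγ 0) hlam
  have hstep : ∀ l : {l : List L.Color // ∀ γ < (Order.succ (#L.Color)).ord, QQ L M c γ l},
      ∃ r : L.Color, ∀ γ < (Order.succ (#L.Color)).ord, QQ L M c γ (l.1 ++ [r]) :=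
    fun l => QQ_all_step L M c hκ l.2
  choose rf hrf using hstep
  let bws : ℕ → {l : List L.Color // ∀ γ < (Order.succ (#L.Color)).ord, QQ L M c γ l} :=
    fun n => Nat.rec ⟨[], base⟩ (fun _ p => ⟨p.1 ++ [rf p], hrf p⟩) n
  have hlen : ∀ n, (bws n).1.length = n := by
    intro n
    induction n with
    | zero => rfl
    | succ n ih => simpa [bws] using ih
  -- membership in W
  have hmemW : ∀ n, (bws n).1 ∈ W := by
    intro n
    rcases Nat.eq_zero_or_pos n with rfl | hpos
    · obtain ⟨l0, hl0⟩ := hW.1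
      have := hW.2.2 l0 hl0 0
      simpa [bws] using this
    · obtain ⟨Y, hY1, hY2⟩ := (bws n).2 0 (Cardinal.isSuccLimit_ord (hκ.trans (Order.le_succ _))).bot_lt
      have hYinf : Y.Infinite := by
        rw [← Set.infinite_coe_iff]
        exact Cardinal.aleph0_le_mk_iff.mp (le_trans (aleph0_le_BGc hκ _ _) hY2)
      obtain ⟨B, hBY, hBcard⟩ := hYinf.exists_subset_card_eq ((bws n).1.length)
      have hBM : ↑B ⊆ M := hBY.trans hY1.1
      have hBne : B.Nonempty := by
        rw [← Finset.card_pos, hBcard, hlen n]; exact hpos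
      have hmono : L.Mono c ↑B := by
        intro A₁ A₂ hA₁ hA₂ hA₁ne hcard
        have hA₂ne : A₂.Nonempty := by
          rw [← Finset.card_pos, ← hcard]; exact Finset.card_pos.mpr hA₁ne
        have e1 := hY1.2.2 A₁ (hA₁.trans hBY) hA₁ne
          (by rw [← hBcard]; exact Finset.card_le_card (Finset.coe_subset.mp hA₁))
        have e2 := hY1.2.2 A₂ (hA₂.trans hBY) hA₂ne
          (by rw [← hBcard]; exact Finset.card_le_card (Finset.coe_subset.mp hA₂))
        rw [hcard] at e1
        exact Option.some_injective _ (e1.symm.trans e2)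
      obtain ⟨l', hl'W, hl'len, hl'diag⟩ := hmem.2 B hBM hBne hmono
      have : l' = (bws n).1 := by
        apply List.ext_getElem?
        intro k
        rcases Nat.lt_or_ge k ((bws n).1.length) with hk | hk
        · obtain ⟨A, hAB, hAcard⟩ := Finset.exists_subset_card_eq
            (n := k + 1) (by omega : k + 1 ≤ B.card)
          have hAne : A.Nonempty := by rw [← Finset.card_pos, hAcard]; omega
          have e1 := hl'diag A hAB hAne
          have e2 := hY1.2.2 A ((Finset.coe_subset.mpr hAB).trans hBY) hAne
            (by rw [hAcard, ← hBcard]; omega)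
          rw [hAcard] at e1 e2
          simp only [Nat.add_sub_cancel] at e1 e2
          rw [e1, e2]
        · have h1 : l'[k]? = none := by
            rw [List.getElem?_eq_none]
            rw [hl'len, hBcard]
            exact hk
          have h2 : ((bws n).1)[k]? = none := by
            rw [List.getElem?_eq_none]; exact hk
          rw [h1, h2]
      rw [← this]; exact hl'W
  refine ⟨fun n => (bws n).1, hlen, fun n => ⟨rf (bws n), rfl⟩, hmemW⟩

end Branch
section Assembly

open scoped Classical

variable (L : ColoringLanguage.{u}) (W : Set (List L.Color))

/-- Package of an infinite branch through `W`. -/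
lemma branch_package (hW : L.IsAllowed W)
    (bw : ℕ → List L.Color) (hbwlen : ∀ n, (bw n).length = n)
    (hbwext : ∀ n, ∃ r, bw (n + 1) = bw n ++ [r]) (hbwW : ∀ n, bw n ∈ W) :
    ∃ w : ℕ → L.Color, (∀ n k, k < n → (bw n)[k]? = some (w k)) ∧
      (∀ k, L.arity (w k) = k + 1) := by
  have hwk : ∀ k, ∃ r, (bw (k + 1))[k]? = some r := by
    intro k
    have hk : k < (bw (k + 1)).length := by rw [hbwlen]; omega
    exact ⟨(bw (k + 1))[k], List.getElem?_eq_getElem hk⟩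
  choose w hw using hwk
  have hentry : ∀ n k, k < n → (bw n)[k]? = some (w k) := by
    intro n
    induction n with
    | zero => intro k hk; omega
    | succ n ih =>
      intro k hk
      rcases Nat.lt_or_ge k n with hlt | hge
      · obtain ⟨r, hr⟩ := hbwext n
        rw [hr, List.getElem?_append_left (by rw [hbwlen]; exact hlt)]
        exact ih k hlt
      · have : k = n := by omega
        subst this
        exact hw k
  refine ⟨w, hentry, ?_⟩
  intro k
  have hk : k < (bw (k + 1)).length := by rw [hbwlen]; omega
  have h1 := hw k
  rw [List.getElem?_eq_getElem hk] at h1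
  have h2 : (bw (k + 1))[k] = w k := Option.some_injective _ h1
  have := hW.2.1 (bw (k + 1)) (hbwW (k + 1)) k hk
  rwa [h2] at this

/-- From a branch: a model of any infinite size. -/
lemma model_of_branch (bw : ℕ → List L.Color) (w : ℕ → L.Color)
    (hbwlen : ∀ n, (bw n).length = n) (hbwW : ∀ n, bw n ∈ W)
    (hentry : ∀ n k, k < n → (bw n)[k]? = some (w k)) (harity : ∀ k, L.arity (w k) = k + 1)
    (μ : Cardinal.{u}) (hμ : ℵ₀ ≤ μ) :
    ∃ (σ : Type u) (M : Set σ) (c : Finset σ → L.Color),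
      L.MemK W M c ∧ Cardinal.mk ↥M = μ := by
  refine ⟨Quotient.out μ, Set.univ, fun A => w (A.card - 1), ⟨?_, ?_⟩, ?_⟩
  · intro A _ hAne
    have h1 : 1 ≤ A.card := Finset.card_pos.mpr hAne
    rw [harity]
    omega
  · intro B _ hBne _
    refine ⟨bw B.card, hbwW _, hbwlen _, ?_⟩
    intro A hA hAne
    have h1 : 1 ≤ A.card := Finset.card_pos.mpr hAne
    have h2 : A.card ≤ B.card := Finset.card_le_card hA
    exact hentry B.card (A.card - 1) (by omega)
  · rw [Cardinal.mk_univ, Cardinal.mk_out]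

/-- From a branch: every model extends properly. -/
lemma extend_of_branch (bw : ℕ → List L.Color) (w : ℕ → L.Color)
    (hbwlen : ∀ n, (bw n).length = n) (hbwW : ∀ n, bw n ∈ W)
    (hentry : ∀ n k, k < n → (bw n)[k]? = some (w k)) (harity : ∀ k, L.arity (w k) = k + 1)
    {σ : Type u} (M : Set σ) (c : Finset σ → L.Color) (hMC : L.MemK W M c) :
    ∃ (τ : Type u) (N : Set τ) (c' : Finset τ → L.Color) (f : σ → τ),
      L.MemK W N c' ∧ L.Emb f M c N c' ∧ f '' M ⊂ N := by
  classical
  set N : Set (Option σ) := (Option.some '' M) ∪ {none} with hN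
  set c' : Finset (Option σ) → L.Color :=
    fun A => if none ∈ A then w (A.card - 1) else c (Finset.eraseNone A) with hc'
  -- basic facts
  have F1 : ∀ A : Finset (Option σ), none ∉ A → (Finset.eraseNone A).card = A.card := by
    intro A hA
    have h1 : (Finset.eraseNone A).image some = A.erase none := Finset.image_some_eraseNone A
    have h2 : (Finset.eraseNone A).card = ((Finset.eraseNone A).image some).card :=
      (Finset.card_image_of_injective _ (Option.some_injective σ)).symm
    rw [h2, h1, Finset.erase_eq_of_notMem hA]
  have F2 : ∀ A : Finset (Option σ), none ∉ A → ↑A ⊆ N → ↑(Finset.eraseNone A) ⊆ M := by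
    intro A hA hAN a ha
    have h1 : some a ∈ A := Finset.mem_eraseNone.mp ha
    rcases hAN h1 with h | h
    · obtain ⟨m, hm, he⟩ := h
      rwa [← Option.some_injective σ he]
    · exact absurd h (by simp)
  have F3 : ∀ A : Finset σ, Finset.eraseNone (A.image some) = A :=
    fun A => Finset.eraseNone_image_some A
  have Fimg : ∀ A : Finset σ, none ∉ A.image some := by
    intro A h
    obtain ⟨a, _, he⟩ := Finset.mem_image.mp h
    exact Option.some_ne_none _ he
  have Fc' : ∀ A : Finset σ, c' (A.image some) = c A := by
    intro A
    rw [hc']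
    simp only [if_neg (Fimg A)]
    rw [F3]
  have hMemK : L.MemK W N c' := by
    constructor
    · -- coloring
      intro A hAN hAne
      by_cases hn : none ∈ A
      · rw [hc']
        simp only [if_pos hn]
        have h1 : 1 ≤ A.card := Finset.card_pos.mpr hAne
        rw [harity]; omega
      · rw [hc']
        simp only [if_neg hn]
        have h1 := hMC.1 (Finset.eraseNone A) (F2 A hn hAN)
          (Finset.card_pos.mp (by rw [F1 A hn]; exact Finset.card_pos.mpr hAne))
        rw [h1, F1 A hn]
    · -- diagrams of monochromatic sets
      intro B hBN hBne hmono
      by_cases hn : none ∈ B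
      · have key : ∀ A : Finset (Option σ), A ⊆ B → A.Nonempty → c' A = w (A.card - 1) := by
          intro A hA hAne
          by_cases hnA : none ∈ A
          · rw [hc']; simp only [if_pos hnA]
          · obtain ⟨a, ha⟩ := hAne
            have hcard1 : 1 ≤ A.card := Finset.card_pos.mpr ⟨a, ha⟩
            set A' : Finset (Option σ) := insert none (A.erase a) with hA'
            have hnea : none ∉ A.erase a := fun h => hnA (Finset.mem_of_mem_erase h)
            have hcard : A'.card = A.card := by
              rw [hA', Finset.card_insert_of_notMem hnea, Finset.card_erase_of_mem ha]
              omega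
            have hA'B : ↑A' ⊆ (↑B : Set (Option σ)) := by
              intro x hx
              rcases Finset.mem_insert.mp (Finset.mem_coe.mp hx) with rfl | hx
              · exact hn
              · exact hA (Finset.mem_of_mem_erase hx)
            have heq : c' A = c' A' := hmono A A' (Finset.coe_subset.mpr hA) hA'B
              ⟨a, ha⟩ hcard.symm
            rw [heq, hc']
            simp only [if_pos (by simp [hA'] : none ∈ A')]
            rw [hcard]
        refine ⟨bw B.card, hbwW _, hbwlen _, ?_⟩
        intro A hA hAne
        have h1 : 1 ≤ A.card := Finset.card_pos.mpr hAne
        have h2 : A.card ≤ B.card := Finset.card_le_card hA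
        rw [key A hA hAne]
        exact hentry B.card (A.card - 1) (by omega)
      · set B₀ := Finset.eraseNone B with hB₀
        have hB₀M : ↑B₀ ⊆ M := F2 B hn hBN
        have hB₀card : B₀.card = B.card := F1 B hn
        have hB₀ne : B₀.Nonempty :=
          Finset.card_pos.mp (by rw [hB₀card]; exact Finset.card_pos.mpr hBne)
        have himgsub : ∀ A₀ : Finset σ, A₀ ⊆ B₀ → ↑(A₀.image some) ⊆ (↑B : Set (Option σ)) := by
          intro A₀ hsub x hx
          obtain ⟨a, ha, rfl⟩ := Finset.mem_image.mp (Finset.mem_coe.mp hx)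
          exact Finset.mem_coe.mpr (Finset.mem_eraseNone.mp (hsub ha))
        have hmono₀ : L.Mono c ↑B₀ := by
          intro A₁ A₂ h₁ h₂ hne hcard
          have e1 : c' (A₁.image some) = c' (A₂.image some) := by
            refine hmono _ _ (himgsub A₁ (Finset.coe_subset.mp h₁))
              (himgsub A₂ (Finset.coe_subset.mp h₂)) (hne.image some) ?_
            rw [Finset.card_image_of_injective _ (Option.some_injective σ),
              Finset.card_image_of_injective _ (Option.some_injective σ), hcard]
          rwa [Fc', Fc'] at e1
        obtain ⟨l, hlW, hllen, hldiag⟩ := hMC.2 B₀ hB₀M hB₀ne hmono₀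
        refine ⟨l, hlW, by rw [hllen, hB₀card], ?_⟩
        intro A hA hAne
        have hnA : none ∉ A := fun h => hn (hA h)
        have hc'A : c' A = c (Finset.eraseNone A) := by
          rw [hc']; simp only [if_neg hnA]
        have hsub : Finset.eraseNone A ⊆ B₀ := by
          intro a ha
          exact Finset.mem_eraseNone.mpr (hA (Finset.mem_eraseNone.mp ha))
        have hcard : (Finset.eraseNone A).card = A.card := F1 A hnA
        have hne₀ : (Finset.eraseNone A).Nonempty :=
          Finset.card_pos.mp (by rw [hcard]; exact Finset.card_pos.mpr hAne)
        have := hldiag (Finset.eraseNone A) hsub hne₀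
        rw [hcard] at this
        rw [hc'A]
        exact this
  refine ⟨Option σ, N, c', Option.some, hMemK, ⟨?_, ?_, ?_⟩, ?_, ?_⟩
  · exact (Option.some_injective σ).injOn
  · exact Set.subset_union_left
  · intro A _ _
    convert Fc' A using 2
    ext x
    simp
  · exact Set.subset_union_left
  · intro hsub
    have : (none : Option σ) ∈ Option.some '' M := hsub (Set.mem_union_right _ rfl)
    obtain ⟨m, _, hm⟩ := this
    exact Option.some_ne_none _ hm
end Assembly
/-- if `K(W)` has a model of size `≥ ℶ_{|L|⁺}(|L|)`, then (1) `K(W)` has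
models of every infinite cardinality, and (2) `K(W)` has no maximal models. -/
theorem stmt11 (L : ColoringLanguage.{u}) (W : Set (List L.Color))
    (hW : L.IsAllowed W) (lam : Cardinal.{u})
    (hlam : bethF (Cardinal.mk L.Color) (Order.succ (Cardinal.mk L.Color)).ord ≤ lam)
    (hmodel : ∃ (σ : Type u) (M : Set σ) (c : Finset σ → L.Color),
      L.MemK W M c ∧ Cardinal.mk ↥M = lam) :
    (∀ μ : Cardinal.{u}, ℵ₀ ≤ μ →
      ∃ (σ : Type u) (M : Set σ) (c : Finset σ → L.Color),
        L.MemK W M c ∧ Cardinal.mk ↥M = μ) ∧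
    (∀ (σ : Type u) (M : Set σ) (c : Finset σ → L.Color), L.MemK W M c →
      ∃ (τ : Type u) (N : Set τ) (c' : Finset τ → L.Color) (f : σ → τ),
        L.MemK W N c' ∧ L.Emb f M c N c' ∧ f '' M ⊂ N) := by
  have hκ : ℵ₀ ≤ #L.Color := by
    choose f hf using fun n : ℕ => L.exists_arity (n + 1) (by omega)
    have hfinj : Function.Injective f := by
      intro a b h
      have h1 := hf a
      rw [h, hf b] at h1
      omega
    exact Cardinal.aleph0_le_mk_iff.mpr (Infinite.of_injective f hfinj)
  obtain ⟨σ₀, M₀, c₀, hmem₀, hcard₀⟩ := hmodel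
  obtain ⟨bw, hbwlen, hbwext, hbwW⟩ := exists_branch L W M₀ c₀ hW hκ hlam hmem₀ hcard₀
  obtain ⟨w, hentry, harity⟩ := branch_package L W hW bw hbwlen hbwext hbwW
  constructor
  · intro μ hμ
    exact model_of_branch L W bw w hbwlen hbwW hentry harity μ hμ
  · intro σ M c hMC
    exact extend_of_branch L W bw w hbwlen hbwW hentry harity M c hMC
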